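/- arXiv:1807.03025 — 2 statements merged into one kernel-verified Lean document; each statement's English description precedes it below -/
import Mathlib

section
/- Let T > 0 and α ≥ 0 be constants, let h : [0,T] → [0,∞) be continuous, let w : [0,T] → [0,∞) be integrable, and let v : [0,T] × [0,T] → [0,∞) be integrable. If h(t) ≤ α + ∫₀ᵗ w(τ) h(τ) dτ + ∫₀ᵗ ∫₀^τ v(s,τ) h(s) ds dτ for every t ∈ [0,T], then h(t) ≤ α · exp( ∫₀ᵗ ( w(τ) + ∫₀^τ v(s,τ) ds ) dτ ) for every t ∈ [0,T]. -/
open MeasureTheory intervalIntegral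

lemma gronwall_cont (T α : ℝ) (K H : ℝ → ℝ) (hK : Continuous K) (hH : Continuous H)
    (hKpos : ∀ t ∈ Set.Icc (0:ℝ) T, 0 ≤ K t)
    (hyp : ∀ t ∈ Set.Icc (0:ℝ) T, H t ≤ α + ∫ τ in (0:ℝ)..t, K τ * H τ) :
    ∀ t ∈ Set.Icc (0:ℝ) T, H t ≤ α * Real.exp (∫ τ in (0:ℝ)..t, K τ) := by
  intro t ht
  have h0T : (0:ℝ) ≤ T := le_trans ht.1 ht.2
  set F : ℝ → ℝ := fun t => ∫ τ in (0:ℝ)..t, K τ * H τ with hF_def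
  set G : ℝ → ℝ := fun t => ∫ τ in (0:ℝ)..t, K τ with hG_def
  have hF : ∀ x : ℝ, HasDerivAt F (K x * H x) x := fun x =>
    ((hK.mul hH).integral_hasStrictDerivAt 0 x).hasDerivAt
  have hG : ∀ x : ℝ, HasDerivAt G (K x) x := fun x =>
    (hK.integral_hasStrictDerivAt 0 x).hasDerivAt
  set φ : ℝ → ℝ := fun x => (α + F x) * Real.exp (-G x) with hφ_def
  have hφ : ∀ x : ℝ, HasDerivAt φ
      ((K x * H x) * Real.exp (-G x) + (α + F x) * (Real.exp (-G x) * -(K x))) x := by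
    intro x
    exact (((hasDerivAt_const x α).add (hF x)).mul (((hG x).neg).exp)).congr_deriv (by simp only [Pi.neg_apply, Pi.add_apply]; ring)
  have hφcont : Continuous φ := by
    apply Continuous.mul
    · exact continuous_const.add (continuous_iff_continuousAt.2 fun x => (hF x).continuousAt)
    · exact Real.continuous_exp.comp
        ((continuous_iff_continuousAt.2 fun x => (hG x).continuousAt).neg)
  have hanti : AntitoneOn φ (Set.Icc 0 T) := by
    apply antitoneOn_of_deriv_nonpos (convex_Icc 0 T) hφcont.continuousOn
    · intro x hx
      exact (hφ x).differentiableAt.differentiableWithinAt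
    · intro x hx
      rw [interior_Icc] at hx
      rw [(hφ x).deriv]
      have hx' : x ∈ Set.Icc (0:ℝ) T := ⟨hx.1.le, hx.2.le⟩
      have h1 : H x ≤ α + F x := hyp x hx'
      have h2 : 0 ≤ K x := hKpos x hx'
      have h3 : (0:ℝ) < Real.exp (-G x) := Real.exp_pos _
      nlinarith [mul_le_mul_of_nonneg_left h1 h2]
  have hφ0 : φ 0 = α := by
    simp [hφ_def, hF_def, hG_def, intervalIntegral.integral_same]
  have hle : φ t ≤ α := by
    rw [← hφ0]
    exact hanti (Set.left_mem_Icc.2 h0T) ht ht.1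
  have hexp : α + F t = φ t * Real.exp (G t) := by
    rw [hφ_def]
    simp only []
    rw [mul_assoc, ← Real.exp_add]
    simp
  calc H t ≤ α + F t := hyp t ht
    _ = φ t * Real.exp (G t) := hexp
    _ ≤ α * Real.exp (G t) := mul_le_mul_of_nonneg_right hle (Real.exp_nonneg _)


lemma mul_cont_integrableOn {T : ℝ} {K H : ℝ → ℝ}
    (hK : IntegrableOn K (Set.Icc 0 T)) (hH : ContinuousOn H (Set.Icc 0 T)) :
    IntegrableOn (fun τ => K τ * H τ) (Set.Icc 0 T) := by
  obtain ⟨M, hM⟩ := isCompact_Icc.exists_bound_of_continuousOn hH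
  apply Integrable.mono' (hK.norm.const_mul M)
    (hK.aestronglyMeasurable.mul (hH.aestronglyMeasurable measurableSet_Icc))
  rw [ae_restrict_iff' measurableSet_Icc]
  refine ae_of_all _ fun x hx => ?_
  show ‖K x * H x‖ ≤ M * ‖K x‖
  have h1 := hM x hx
  have h2 : ‖K x * H x‖ = ‖K x‖ * ‖H x‖ := norm_mul _ _
  nlinarith [norm_nonneg (K x), norm_nonneg (H x)]

lemma gronwall_intcoef (T α : ℝ) (hα : 0 ≤ α) (K H : ℝ → ℝ)
    (hK_int : IntegrableOn K (Set.Icc 0 T))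
    (hK0 : ∀ t ∈ Set.Icc (0:ℝ) T, 0 ≤ K t)
    (hH_cont : ContinuousOn H (Set.Icc 0 T))
    (hH0 : ∀ t ∈ Set.Icc (0:ℝ) T, 0 ≤ H t)
    (hyp : ∀ t ∈ Set.Icc (0:ℝ) T, H t ≤ α + ∫ τ in (0:ℝ)..t, K τ * H τ) :
    ∀ t ∈ Set.Icc (0:ℝ) T, H t ≤ α * Real.exp (∫ τ in (0:ℝ)..t, K τ) := by
  intro t ht
  have h0T : (0:ℝ) ≤ T := le_trans ht.1 ht.2
  obtain ⟨M, hM⟩ := isCompact_Icc.exists_bound_of_continuousOn hH_cont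
  have hM0 : 0 ≤ M := le_trans (norm_nonneg _) (hM 0 (Set.left_mem_Icc.2 h0T))
  -- continuous extension of H
  set H' : ℝ → ℝ := Set.IccExtend h0T ((Set.Icc (0:ℝ) T).restrict H) with hH'def
  have hH'cont : Continuous H' :=
    (continuousOn_iff_continuous_restrict.1 hH_cont).Icc_extend'
  have hH'eq : ∀ x ∈ Set.Icc (0:ℝ) T, H' x = H x := fun x hx => by
    rw [hH'def, Set.IccExtend_of_mem h0T _ hx]; rfl
  -- integrability of K * H on the interval
  have hKH_int : IntegrableOn (fun τ => K τ * H τ) (Set.Icc 0 T) :=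
    mul_cont_integrableOn hK_int hH_cont
  have hsub : ∀ u ∈ Set.Icc (0:ℝ) T, Set.uIcc (0:ℝ) u ⊆ Set.Icc (0:ℝ) T := by
    intro u hu
    rw [Set.uIcc_of_le hu.1]
    exact Set.Icc_subset_Icc_right hu.2
  have hiiKH : ∀ u ∈ Set.Icc (0:ℝ) T,
      IntervalIntegrable (fun τ => K τ * H τ) volume 0 u := fun u hu =>
    (hKH_int.mono_set (hsub u hu)).intervalIntegrable
  have hiiK : ∀ u ∈ Set.Icc (0:ℝ) T, IntervalIntegrable K volume 0 u := fun u hu =>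
    (hK_int.mono_set (hsub u hu)).intervalIntegrable
  -- the key ε-approximation claim
  have key : ∀ ε > (0:ℝ), H t ≤ (α + M*ε) * Real.exp ((∫ τ in (0:ℝ)..t, K τ) + ε) := by
    intro ε hε
    set K' : ℝ → ℝ := (Set.Icc (0:ℝ) T).indicator K with hK'def
    have hK' : Integrable K' := (integrable_indicator_iff measurableSet_Icc).2 hK_int
    obtain ⟨Kc, -, hKc_close, hKc_cont, hKc_int⟩ :=
      hK'.exists_hasCompactSupport_integral_sub_le hε
    set Kp : ℝ → ℝ := fun x => max (Kc x) 0 with hKpdef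
    have hKp_cont : Continuous Kp := hKc_cont.max continuous_const
    have hKp_int : Integrable Kp := hKc_int.pos_part
    have hKp0 : ∀ x, 0 ≤ Kp x := fun x => le_max_right _ _
    have hptw : ∀ x ∈ Set.Icc (0:ℝ) T, |K x - Kp x| ≤ ‖K' x - Kc x‖ := by
      intro x hx
      rw [Real.norm_eq_abs, hK'def, Set.indicator_of_mem hx]
      have h0 := hK0 x hx
      rcases le_total (Kc x) 0 with hc | hc
      · rw [hKpdef]; simp only [max_eq_right hc, sub_zero, abs_of_nonneg h0]
        exact le_trans (by linarith) (le_abs_self (K x - Kc x))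
      · rw [hKpdef]; simp only [max_eq_left hc]; exact le_rfl
    have hKKp_int : IntegrableOn (fun x => |K x - Kp x|) (Set.Icc 0 T) :=
      (hK_int.sub hKp_int.integrableOn).abs
    have hδ : ∫ x in Set.Icc (0:ℝ) T, |K x - Kp x| ≤ ε :=
      calc ∫ x in Set.Icc (0:ℝ) T, |K x - Kp x|
          ≤ ∫ x in Set.Icc (0:ℝ) T, ‖K' x - Kc x‖ :=
            setIntegral_mono_on hKKp_int (hK'.sub hKc_int).norm.integrableOn
              measurableSet_Icc hptw
        _ ≤ ∫ x, ‖K' x - Kc x‖ :=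
            setIntegral_le_integral (hK'.sub hKc_int).norm
              (ae_of_all _ fun x => norm_nonneg _)
        _ ≤ ε := hKc_close
    have hIocδ : ∀ u ∈ Set.Icc (0:ℝ) T, (∫ x in (0:ℝ)..u, |K x - Kp x|) ≤ ε := by
      intro u hu
      rw [intervalIntegral.integral_of_le hu.1]
      refine le_trans ?_ hδ
      rw [show (∫ x in Set.Icc (0:ℝ) T, |K x - Kp x|) =
        ∫ x in Set.Icc (0:ℝ) T, |K x - Kp x| from rfl]
      apply setIntegral_mono_set hKKp_int (ae_of_all _ fun x => abs_nonneg _)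
      exact ((Set.Ioc_subset_Icc_self).trans (Set.Icc_subset_Icc_right hu.2)).eventuallyLE
    have hiiKp : ∀ u : ℝ, IntervalIntegrable Kp volume 0 u := fun u =>
      hKp_cont.intervalIntegrable 0 u
    have hiiKpH : ∀ u ∈ Set.Icc (0:ℝ) T,
        IntervalIntegrable (fun τ => Kp τ * H τ) volume 0 u := fun u hu =>
      ((mul_cont_integrableOn hKp_int.integrableOn hH_cont).mono_set
        (hsub u hu)).intervalIntegrable
    have hiiAbs : ∀ u ∈ Set.Icc (0:ℝ) T,
        IntervalIntegrable (fun x => |K x - Kp x|) volume 0 u := fun u hu =>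
      (hKKp_int.mono_set (hsub u hu)).intervalIntegrable
    -- apply the continuous Gronwall lemma
    have hmain := gronwall_cont T (α + M*ε) Kp H' hKp_cont hH'cont
      (fun x _ => hKp0 x) ?_ t ht
    · -- conclude from hmain
      rw [hH'eq t ht] at hmain
      refine le_trans hmain ?_
      have hKpK : (∫ τ in (0:ℝ)..t, Kp τ) ≤ (∫ τ in (0:ℝ)..t, K τ) + ε := by
        have h1 : (∫ τ in (0:ℝ)..t, Kp τ) - (∫ τ in (0:ℝ)..t, K τ)
            = ∫ τ in (0:ℝ)..t, (Kp τ - K τ) :=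
          (intervalIntegral.integral_sub (hiiKp t) (hiiK t ht)).symm
        have h2 : (∫ τ in (0:ℝ)..t, (Kp τ - K τ)) ≤ ∫ τ in (0:ℝ)..t, |K τ - Kp τ| := by
          apply intervalIntegral.integral_mono_on ht.1 ((hiiKp t).sub (hiiK t ht))
            (hiiAbs t ht)
          intro x _
          rw [abs_sub_comm]
          exact le_abs_self _
        linarith [hIocδ t ht]
      exact mul_le_mul_of_nonneg_left (Real.exp_le_exp.2 hKpK) (by nlinarith)
    · -- hypothesis for the continuous Gronwall lemma
      intro u hu
      have e1 : (∫ τ in (0:ℝ)..u, Kp τ * H' τ) = ∫ τ in (0:ℝ)..u, Kp τ * H τ := by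
        apply intervalIntegral.integral_congr
        intro x hx
        show Kp x * H' x = Kp x * H x
        rw [hH'eq x (hsub u hu hx)]
      rw [hH'eq u hu, e1]
      have h2 : (∫ τ in (0:ℝ)..u, K τ * H τ) - (∫ τ in (0:ℝ)..u, Kp τ * H τ) ≤ M * ε := by
        have e2 : (∫ τ in (0:ℝ)..u, K τ * H τ) - (∫ τ in (0:ℝ)..u, Kp τ * H τ)
            = ∫ τ in (0:ℝ)..u, (K τ * H τ - Kp τ * H τ) :=
          (intervalIntegral.integral_sub (hiiKH u hu) (hiiKpH u hu)).symm
        have e3 : (∫ τ in (0:ℝ)..u, (K τ * H τ - Kp τ * H τ))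
            ≤ ∫ τ in (0:ℝ)..u, M * |K τ - Kp τ| := by
          apply intervalIntegral.integral_mono_on hu.1
            ((hiiKH u hu).sub (hiiKpH u hu)) ((hiiAbs u hu).const_mul M)
          intro x hx
          have hx' : x ∈ Set.Icc (0:ℝ) T := Set.Icc_subset_Icc_right hu.2 hx
          have hb := hM x hx'
          rw [Real.norm_eq_abs, abs_of_nonneg (hH0 x hx')] at hb
          have h0 := hH0 x hx'
          have := le_abs_self (K x - Kp x)
          have := neg_abs_le (K x - Kp x)
          nlinarith [abs_nonneg (K x - Kp x)]
        have e4 : (∫ τ in (0:ℝ)..u, M * |K τ - Kp τ|)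
            = M * ∫ τ in (0:ℝ)..u, |K τ - Kp τ| := intervalIntegral.integral_const_mul _ _
        have := hIocδ u hu
        nlinarith
      linarith [hyp u hu]
  -- take the limit ε → 0⁺
  have hcont : Filter.Tendsto
      (fun ε : ℝ => (α + M*ε) * Real.exp ((∫ τ in (0:ℝ)..t, K τ) + ε))
      (nhdsWithin 0 (Set.Ioi 0)) (nhds (α * Real.exp (∫ τ in (0:ℝ)..t, K τ))) := by
    have : Continuous fun ε : ℝ =>
        (α + M*ε) * Real.exp ((∫ τ in (0:ℝ)..t, K τ) + ε) := by
      continuity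
    have h := (this.tendsto 0).mono_left (nhdsWithin_le_nhds (s := Set.Ioi (0:ℝ)))
    simpa using h
  exact ge_of_tendsto hcont
    (Filter.eventually_iff_exists_mem.2 ⟨Set.Ioi 0, self_mem_nhdsWithin,
      fun ε hε => key ε hε⟩)

/-- Gronwall-type inequality with an additional iterated double-integral term. -/
theorem gronwall_with_double_integral
    (T : ℝ) (hT : 0 < T) (α : ℝ) (hα : 0 ≤ α)
    (h w : ℝ → ℝ) (v : ℝ → ℝ → ℝ)
    (hh_cont : ContinuousOn h (Set.Icc 0 T))
    (hh_nonneg : ∀ t ∈ Set.Icc (0:ℝ) T, 0 ≤ h t)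
    (hw_nonneg : ∀ t ∈ Set.Icc (0:ℝ) T, 0 ≤ w t)
    (hv_nonneg : ∀ s ∈ Set.Icc (0:ℝ) T, ∀ τ ∈ Set.Icc (0:ℝ) T, 0 ≤ v s τ)
    (hw_int : IntegrableOn w (Set.Icc 0 T))
    (hv_int : IntegrableOn (fun p : ℝ × ℝ => v p.1 p.2) (Set.Icc 0 T ×ˢ Set.Icc 0 T))
    (hineq : ∀ t ∈ Set.Icc (0:ℝ) T,
      h t ≤ α + (∫ τ in (0:ℝ)..t, w τ * h τ)
        + ∫ τ in (0:ℝ)..t, (∫ s in (0:ℝ)..τ, v s τ * h s)) :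
    ∀ t ∈ Set.Icc (0:ℝ) T,
      h t ≤ α * Real.exp (∫ τ in (0:ℝ)..t, (w τ + ∫ s in (0:ℝ)..τ, v s τ)) := by
  have h0T : (0:ℝ) ≤ T := hT.le
  set S : Set ℝ := Set.Icc 0 T with hSdef
  obtain ⟨M, hM⟩ := isCompact_Icc.exists_bound_of_continuousOn hh_cont
  -- restricted product measure
  have hprodeq : (volume : Measure (ℝ × ℝ)).restrict (S ×ˢ S)
      = (volume.restrict S).prod (volume.restrict S) := by
    rw [Measure.volume_eq_prod, Measure.prod_restrict]
  -- the triangular set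
  set E : Set (ℝ × ℝ) := {p : ℝ × ℝ | 0 < p.1 ∧ p.1 ≤ p.2} ∩ (S ×ˢ S) with hEdef
  have hEm : MeasurableSet E := by
    apply MeasurableSet.inter
    · exact (measurableSet_lt measurable_const measurable_fst).inter
        (measurableSet_le measurable_fst measurable_snd)
    · exact measurableSet_Icc.prod measurableSet_Icc
  -- v * h is integrable on the square
  have hvh_prod : IntegrableOn (fun p : ℝ × ℝ => v p.1 p.2 * h p.1) (S ×ˢ S) := by
    apply Integrable.mono' (hv_int.norm.const_mul M)
    · apply hv_int.aestronglyMeasurable.mul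
      rw [IntegrableOn, hprodeq] at *
      exact (hh_cont.aestronglyMeasurable measurableSet_Icc).comp_fst
    · rw [ae_restrict_iff' (measurableSet_Icc.prod measurableSet_Icc)]
      refine ae_of_all _ fun p hp => ?_
      show ‖v p.1 p.2 * h p.1‖ ≤ M * ‖v p.1 p.2‖
      have h1 := hM p.1 hp.1
      rw [norm_mul]
      nlinarith [norm_nonneg (v p.1 p.2), norm_nonneg (h p.1)]
  -- indicator functions on the plane
  set u₁ : ℝ × ℝ → ℝ := E.indicator (fun p : ℝ × ℝ => v p.1 p.2 * h p.1) with hu₁def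
  set u₂ : ℝ × ℝ → ℝ := E.indicator (fun p : ℝ × ℝ => v p.1 p.2) with hu₂def
  have hu₁ : Integrable u₁ volume :=
    (integrable_indicator_iff hEm).2 (hvh_prod.mono_set Set.inter_subset_right)
  have hu₂ : Integrable u₂ volume :=
    (integrable_indicator_iff hEm).2 (hv_int.mono_set Set.inter_subset_right)
  -- integrability of the partial integrals
  have hB : ∀ u : ℝ × ℝ → ℝ, Integrable u volume →
      Integrable (fun τ => ∫ s, u (s, τ)) volume := by
    intro u hu
    rw [Measure.volume_eq_prod] at hu
    have := hu.swap.integral_prod_left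
    simpa [Function.comp] using this
  -- identification of the partial integrals on S
  have hEiff : ∀ τ ∈ S, ∀ s : ℝ, ((s, τ) ∈ E ↔ s ∈ Set.Ioc 0 τ) := by
    intro τ hτ s
    constructor
    · exact fun hmem => ⟨hmem.1.1, hmem.1.2⟩
    · exact fun hs => ⟨⟨hs.1, hs.2⟩, ⟨⟨hs.1.le, hs.2.trans hτ.2⟩, hτ⟩⟩
  have hA_eq : ∀ τ ∈ S, (∫ s, u₁ (s, τ)) = ∫ s in (0:ℝ)..τ, v s τ * h s := by
    intro τ hτ
    have heq : (fun s => u₁ (s, τ)) = (Set.Ioc 0 τ).indicator (fun s => v s τ * h s) := by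
      funext s
      by_cases hs : s ∈ Set.Ioc (0:ℝ) τ
      · rw [hu₁def]
        rw [Set.indicator_of_mem ((hEiff τ hτ s).2 hs), Set.indicator_of_mem hs]
      · rw [hu₁def]
        rw [Set.indicator_of_notMem (fun hmem => hs ((hEiff τ hτ s).1 hmem)),
          Set.indicator_of_notMem hs]
    rw [heq, MeasureTheory.integral_indicator measurableSet_Ioc, intervalIntegral.integral_of_le hτ.1]
  have hg_eq : ∀ τ ∈ S, (∫ s, u₂ (s, τ)) = ∫ s in (0:ℝ)..τ, v s τ := by
    intro τ hτ
    have heq : (fun s => u₂ (s, τ)) = (Set.Ioc 0 τ).indicator (fun s => v s τ) := by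
      funext s
      by_cases hs : s ∈ Set.Ioc (0:ℝ) τ
      · rw [hu₂def]
        rw [Set.indicator_of_mem ((hEiff τ hτ s).2 hs), Set.indicator_of_mem hs]
      · rw [hu₂def]
        rw [Set.indicator_of_notMem (fun hmem => hs ((hEiff τ hτ s).1 hmem)),
          Set.indicator_of_notMem hs]
    rw [heq, MeasureTheory.integral_indicator measurableSet_Ioc, intervalIntegral.integral_of_le hτ.1]
  -- the kernels
  set Av : ℝ → ℝ := fun τ => ∫ s in (0:ℝ)..τ, v s τ * h s with hAvdef
  set gv : ℝ → ℝ := fun τ => ∫ s in (0:ℝ)..τ, v s τ with hgvdef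
  have hA_int : IntegrableOn Av S := by
    exact ((hB u₁ hu₁).integrableOn).congr
      ((ae_restrict_mem measurableSet_Icc).mono fun τ hτ => hA_eq τ hτ)
  have hg_int : IntegrableOn gv S := by
    exact ((hB u₂ hu₂).integrableOn).congr
      ((ae_restrict_mem measurableSet_Icc).mono fun τ hτ => hg_eq τ hτ)
  set K : ℝ → ℝ := fun τ => w τ + gv τ with hKdef
  have hK_int : IntegrableOn K S := hw_int.add hg_int
  have hg_nonneg : ∀ τ ∈ S, 0 ≤ gv τ := fun τ hτ =>
    intervalIntegral.integral_nonneg hτ.1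
      (fun s hs => hv_nonneg s ⟨hs.1, hs.2.trans hτ.2⟩ τ hτ)
  have hK_nonneg : ∀ τ ∈ S, 0 ≤ K τ := fun τ hτ =>
    add_nonneg (hw_nonneg τ hτ) (hg_nonneg τ hτ)
  have hwh_int : IntegrableOn (fun τ => w τ * h τ) S := mul_cont_integrableOn hw_int hh_cont
  -- interval integrability helpers
  have hsub : ∀ u ∈ S, Set.uIcc (0:ℝ) u ⊆ S := by
    intro u hu
    rw [Set.uIcc_of_le hu.1, hSdef]
    exact Set.Icc_subset_Icc_right hu.2
  have hii_wh : ∀ u ∈ S, IntervalIntegrable (fun τ => w τ * h τ) volume 0 u := fun u hu =>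
    (hwh_int.mono_set (hsub u hu)).intervalIntegrable
  have hii_A : ∀ u ∈ S, IntervalIntegrable Av volume 0 u := fun u hu =>
    (hA_int.mono_set (hsub u hu)).intervalIntegrable
  -- the majorant function φ
  set φ : ℝ → ℝ := fun x => α + (∫ τ in (0:ℝ)..x, w τ * h τ) + ∫ τ in (0:ℝ)..x, Av τ
    with hφdef
  have hφ_cont : ContinuousOn φ S := by
    have h1 : ContinuousOn (fun x => ∫ τ in (0:ℝ)..x, w τ * h τ) (Set.uIcc (0:ℝ) T) :=
      intervalIntegral.continuousOn_primitive_interval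
        (by rwa [Set.uIcc_of_le h0T])
    have h2 : ContinuousOn (fun x => ∫ τ in (0:ℝ)..x, Av τ) (Set.uIcc (0:ℝ) T) :=
      intervalIntegral.continuousOn_primitive_interval
        (by rwa [Set.uIcc_of_le h0T])
    rw [Set.uIcc_of_le h0T] at h1 h2
    exact (continuousOn_const.add h1).add h2
  have hφ_mono : ∀ s ∈ S, ∀ u ∈ S, s ≤ u → φ s ≤ φ u := by
    intro s hs u hu hsu
    have e1 : (∫ τ in (0:ℝ)..u, w τ * h τ) - (∫ τ in (0:ℝ)..s, w τ * h τ)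
        = ∫ τ in s..u, w τ * h τ :=
      intervalIntegral.integral_interval_sub_left (hii_wh u hu) (hii_wh s hs)
    have e2 : (∫ τ in (0:ℝ)..u, Av τ) - (∫ τ in (0:ℝ)..s, Av τ) = ∫ τ in s..u, Av τ :=
      intervalIntegral.integral_interval_sub_left (hii_A u hu) (hii_A s hs)
    have p1 : 0 ≤ ∫ τ in s..u, w τ * h τ := by
      apply intervalIntegral.integral_nonneg hsu
      intro x hx
      have hxS : x ∈ S := ⟨hs.1.trans hx.1, hx.2.trans hu.2⟩
      exact mul_nonneg (hw_nonneg x hxS) (hh_nonneg x hxS)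
    have p2 : 0 ≤ ∫ τ in s..u, Av τ := by
      apply intervalIntegral.integral_nonneg hsu
      intro x hx
      have hxS : x ∈ S := ⟨hs.1.trans hx.1, hx.2.trans hu.2⟩
      apply intervalIntegral.integral_nonneg hxS.1
      intro y hy
      have hyS : y ∈ S := ⟨hy.1, hy.2.trans hxS.2⟩
      exact mul_nonneg (hv_nonneg y hyS x hxS) (hh_nonneg y hyS)
    rw [hφdef]
    simp only []
    linarith
  have hhφ : ∀ u ∈ S, h u ≤ φ u := fun u hu => hineq u hu
  have hφ_nonneg : ∀ u ∈ S, 0 ≤ φ u := by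
    intro u hu
    have h1 : φ 0 ≤ φ u := hφ_mono 0 (Set.left_mem_Icc.2 h0T) u hu hu.1
    have h2 : φ 0 = α := by
      rw [hφdef]; simp [intervalIntegral.integral_same]
    linarith
  have hφK_int : IntegrableOn (fun τ => K τ * φ τ) S := mul_cont_integrableOn hK_int hφ_cont
  have hii_φK : ∀ u ∈ S, IntervalIntegrable (fun τ => K τ * φ τ) volume 0 u := fun u hu =>
    (hφK_int.mono_set (hsub u hu)).intervalIntegrable
  -- a.e. integrability of sections
  have hv_int' : Integrable (fun p : ℝ × ℝ => v p.1 p.2)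
      ((volume.restrict S).prod (volume.restrict S)) := by
    rw [← hprodeq]; exact hv_int
  have hsec : ∀ᵐ τ ∂(volume.restrict S), IntegrableOn (fun s => v s τ) S :=
    hv_int'.prod_left_ae
  -- the key inequality for φ
  have hkey : ∀ u ∈ S, φ u ≤ α + ∫ τ in (0:ℝ)..u, K τ * φ τ := by
    intro u hu
    have e0 : φ u = α + ∫ τ in (0:ℝ)..u, (w τ * h τ + Av τ) := by
      rw [intervalIntegral.integral_add (hii_wh u hu) (hii_A u hu), hφdef]
      ring
    rw [e0]
    have hae : (fun τ => w τ * h τ + Av τ)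
        ≤ᵐ[volume.restrict (Set.Icc 0 u)] fun τ => K τ * φ τ := by
      have hsec' : ∀ᵐ τ ∂(volume.restrict (Set.Icc (0:ℝ) u)),
          IntegrableOn (fun s => v s τ) S :=
        ae_restrict_of_ae_restrict_of_subset (Set.Icc_subset_Icc_right hu.2) hsec
      filter_upwards [hsec', ae_restrict_mem measurableSet_Icc] with τ hτint hτmem
      have hτS : τ ∈ S := Set.Icc_subset_Icc_right hu.2 hτmem
      have p1 : w τ * h τ ≤ w τ * φ τ :=
        mul_le_mul_of_nonneg_left (hhφ τ hτS) (hw_nonneg τ hτS)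
      have hvint : IntegrableOn (fun s => v s τ) (Set.Ioc 0 τ) :=
        hτint.mono_set (Set.Ioc_subset_Icc_self.trans (Set.Icc_subset_Icc_right hτS.2))
      have hvh_i : IntegrableOn (fun s => v s τ * h s) (Set.Ioc 0 τ) := by
        apply Integrable.mono' (hvint.norm.mul_const M)
        · exact hvint.aestronglyMeasurable.mul
            ((hh_cont.mono (Set.Ioc_subset_Icc_self.trans
              (Set.Icc_subset_Icc_right hτS.2))).aestronglyMeasurable measurableSet_Ioc)
        · rw [ae_restrict_iff' measurableSet_Ioc]
          refine ae_of_all _ fun s hs => ?_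
          show ‖v s τ * h s‖ ≤ ‖v s τ‖ * M
          have h1 := hM s ⟨hs.1.le, hs.2.trans hτS.2⟩
          rw [norm_mul]
          nlinarith [norm_nonneg (v s τ), norm_nonneg (h s)]
      have p2 : Av τ ≤ gv τ * φ τ := by
        rw [hAvdef, hgvdef]
        simp only []
        rw [intervalIntegral.integral_of_le hτS.1, intervalIntegral.integral_of_le hτS.1]
        rw [← MeasureTheory.integral_mul_const]
        apply setIntegral_mono_on hvh_i (hvint.mul_const (φ τ)) measurableSet_Ioc
        intro s hs
        have hsS : s ∈ S := ⟨hs.1.le, hs.2.trans hτS.2⟩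
        exact mul_le_mul_of_nonneg_left
          ((hhφ s hsS).trans (hφ_mono s hsS τ hτS hs.2)) (hv_nonneg s hsS τ hτS)
      calc w τ * h τ + Av τ ≤ w τ * φ τ + gv τ * φ τ := by linarith
        _ = K τ * φ τ := by rw [hKdef]; ring
    have hmono := intervalIntegral.integral_mono_ae_restrict hu.1
      ((hii_wh u hu).add (hii_A u hu)) (hii_φK u hu) hae
    linarith
  -- conclude via the integrable-coefficient Gronwall lemma
  intro t ht
  have hfinal := gronwall_intcoef T α hα K φ hK_int hK_nonneg hφ_cont hφ_nonneg hkey t ht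
  exact le_trans (hhφ t ht) hfinal
end

section
/- Let T > 0 and α ≥ 0 be constants, let h : [0,T] → [0,∞) be continuous, let w : [0,T] → [0,∞) be integrable, and let v : [0,T] × [0,T] → [0,∞) be integrable, and suppose h(t) ≤ α + ∫₀ᵗ w(τ) h(τ) dτ + ∫₀ᵗ ∫₀^τ v(s,τ) h(s) ds dτ for every t ∈ [0,T]. Define h̃(t) := sup_{0 ≤ s ≤ t} h(s). Then h̃(t) ≤ α + ∫₀ᵗ ( w(τ) + ∫₀^τ v(s,τ) ds ) h̃(τ) dτ for every t ∈ [0,T]. -/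
open MeasureTheory

/-- Reduction step for the Gronwall-type inequality with a double-integral term:
the running supremum `h̃(t) = sup_{0 ≤ s ≤ t} h(s)` satisfies a single-integral
Gronwall inequality. -/
theorem gronwall_double_integral_sup_reduction
    (T : ℝ) (hT : 0 < T) (α : ℝ) (hα : 0 ≤ α)
    (h w : ℝ → ℝ) (v : ℝ → ℝ → ℝ)
    (hh_cont : ContinuousOn h (Set.Icc 0 T))
    (hh_nonneg : ∀ t ∈ Set.Icc (0:ℝ) T, 0 ≤ h t)
    (hw_nonneg : ∀ t ∈ Set.Icc (0:ℝ) T, 0 ≤ w t)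
    (hv_nonneg : ∀ s ∈ Set.Icc (0:ℝ) T, ∀ τ ∈ Set.Icc (0:ℝ) T, 0 ≤ v s τ)
    (hw_int : IntegrableOn w (Set.Icc 0 T))
    (hv_int : IntegrableOn (fun p : ℝ × ℝ => v p.1 p.2) (Set.Icc 0 T ×ˢ Set.Icc 0 T))
    (hineq : ∀ t ∈ Set.Icc (0:ℝ) T,
      h t ≤ α + (∫ τ in (0:ℝ)..t, w τ * h τ)
        + ∫ τ in (0:ℝ)..t, (∫ s in (0:ℝ)..τ, v s τ * h s)) :
    ∀ t ∈ Set.Icc (0:ℝ) T,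
      sSup (h '' Set.Icc 0 t) ≤
        α + ∫ τ in (0:ℝ)..t,
          (w τ + ∫ s in (0:ℝ)..τ, v s τ) * sSup (h '' Set.Icc 0 τ) := by
  intro t ht
  have h0T : (0:ℝ) ∈ Set.Icc (0:ℝ) T := ⟨le_rfl, hT.le⟩
  -- a uniform bound for h on [0,T]
  obtain ⟨x₀, hx₀, hmax⟩ := isCompact_Icc.exists_isMaxOn ⟨0, h0T⟩ hh_cont
  set M₀ : ℝ := h x₀ with hM₀def
  have hM₀ : ∀ x ∈ Set.Icc (0:ℝ) T, h x ≤ M₀ := fun x hx => hmax hx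
  have hM₀0 : 0 ≤ M₀ := le_trans (hh_nonneg 0 h0T) (hM₀ 0 h0T)
  -- the running sup, clipped at T so that it is globally monotone
  set H : ℝ → ℝ := fun τ => sSup (h '' Set.Icc 0 (min τ T)) with hHdef
  have hbdd : ∀ τ, ∀ y ∈ h '' Set.Icc 0 (min τ T), y ≤ M₀ := by
    rintro τ y ⟨x, hx, rfl⟩
    exact hM₀ x ⟨hx.1, le_trans hx.2 (min_le_right _ _)⟩
  have hbddAbove : ∀ τ, BddAbove (h '' Set.Icc 0 (min τ T)) := fun τ =>
    ⟨M₀, fun y hy => hbdd τ y hy⟩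
  have hHM : ∀ τ, H τ ≤ M₀ := fun τ => Real.sSup_le (hbdd τ) hM₀0
  have hle : ∀ {s τ : ℝ}, 0 ≤ s → s ≤ τ → s ≤ T → h s ≤ H τ := by
    intro s τ hs hsτ hsT
    exact le_csSup (hbddAbove τ) ⟨s, ⟨hs, le_min hsτ hsT⟩, rfl⟩
  have hH0 : ∀ τ, 0 ≤ H τ := by
    intro τ
    rcases le_or_gt 0 τ with hτ | hτ
    · exact le_trans (hh_nonneg 0 h0T) (hle le_rfl hτ hT.le)
    · have : Set.Icc (0:ℝ) (min τ T) = ∅ := by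
        rw [Set.Icc_eq_empty_iff]
        intro hcon
        exact absurd (le_trans hcon (min_le_left _ _)) (not_le.2 hτ)
      simp [hHdef, this, Real.sSup_empty]
  have hmono : Monotone H := by
    intro τ₁ τ₂ h12
    rcases (h '' Set.Icc 0 (min τ₁ T)).eq_empty_or_nonempty with he | hne
    · rw [hHdef]; simp only [he, Real.sSup_empty]; exact hH0 τ₂
    · exact csSup_le_csSup (hbddAbove τ₂) hne
        (Set.image_mono (Set.Icc_subset_Icc le_rfl (min_le_min_right _ h12)))
  have hHmeas : Measurable H := hmono.measurable
  have hHnorm : ∀ x, ‖H x‖ ≤ M₀ := fun x => by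
    rw [Real.norm_of_nonneg (hH0 x)]; exact hHM x
  -- H agrees with the unclipped sup on [0,T]
  have hHeq : ∀ τ ∈ Set.Icc (0:ℝ) T, H τ = sSup (h '' Set.Icc 0 τ) := by
    intro τ hτ
    rw [hHdef]; simp [min_eq_left hτ.2]
  -- sup is attained
  have hattain : ∀ u ∈ Set.Icc (0:ℝ) T, ∃ u₀ ∈ Set.Icc (0:ℝ) u, H u = h u₀ := by
    intro u hu
    obtain ⟨u₀, hu₀, hmaxu⟩ := isCompact_Icc.exists_isMaxOn ⟨0, ⟨le_rfl, hu.1⟩⟩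
      (hh_cont.mono (Set.Icc_subset_Icc le_rfl hu.2))
    refine ⟨u₀, hu₀, ?_⟩
    rw [hHeq u hu]
    exact IsGreatest.csSup_eq ⟨⟨u₀, hu₀, rfl⟩, by rintro y ⟨x, hx, rfl⟩; exact hmaxu hx⟩
  -- measure-theoretic setup
  set μ : Measure ℝ := volume.restrict (Set.Icc 0 T) with hμdef
  have hv_prod : Integrable (fun p : ℝ × ℝ => v p.1 p.2) (μ.prod μ) := by
    rw [hμdef, Measure.prod_restrict]
    rw [← Measure.volume_eq_prod]
    exact hv_int
  set K : ℝ × ℝ → ℝ := Set.indicator {p : ℝ × ℝ | p.1 ≤ p.2} (fun p => v p.1 p.2) with hKdef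
  have hKmeas : AEStronglyMeasurable K (μ.prod μ) :=
    hv_prod.aestronglyMeasurable.indicator (measurableSet_le measurable_fst measurable_snd)
  have hKint : Integrable K (μ.prod μ) := by
    refine hv_prod.mono hKmeas (Filter.Eventually.of_forall fun p => ?_)
    rw [hKdef, Set.indicator_apply]
    split_ifs
    · exact le_rfl
    · simpa using norm_nonneg (v p.1 p.2)
  -- K (s, τ) as a function of s is the indicator of Iic τ
  have hKslice : ∀ τ : ℝ, (fun s => K (s, τ)) = Set.indicator (Set.Iic τ) (fun s => v s τ) := by
    intro τ
    funext s
    simp only [hKdef, Set.indicator_apply, Set.mem_setOf_eq, Set.mem_Iic]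
  set φ : ℝ → ℝ := fun τ => ∫ s, K (s, τ) ∂μ with hφdef
  have hφint : Integrable φ μ := hKint.integral_prod_right
  -- pointwise identification of φ with the inner integral
  have hφeq : ∀ τ ∈ Set.Icc (0:ℝ) T, φ τ = ∫ s in Set.Ioc (0:ℝ) τ, v s τ := by
    intro τ hτ
    rw [hφdef]
    simp only [hKslice τ, hμdef]
    rw [setIntegral_indicator measurableSet_Iic]
    have : Set.Icc (0:ℝ) T ∩ Set.Iic τ = Set.Icc 0 τ := by
      ext x; simp only [Set.mem_inter_iff, Set.mem_Icc, Set.mem_Iic]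
      constructor
      · rintro ⟨⟨hx0, _⟩, hxτ⟩; exact ⟨hx0, hxτ⟩
      · rintro ⟨hx0, hxτ⟩; exact ⟨⟨hx0, le_trans hxτ hτ.2⟩, hxτ⟩
    rw [this, integral_Icc_eq_integral_Ioc]
  have hφ0 : ∀ τ ∈ Set.Icc (0:ℝ) T, 0 ≤ φ τ := by
    intro τ hτ
    rw [hφdef, hμdef]
    refine setIntegral_nonneg measurableSet_Icc fun s hs => ?_
    rw [show K (s, τ) = (Set.Iic τ).indicator (fun s => v s τ) s from congrFun (hKslice τ) s]
    exact Set.indicator_nonneg (fun x hx => hv_nonneg _ ⟨hs.1, hs.2⟩ _ hτ) s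
  -- interval integrals as set integrals
  have hinner_eq : ∀ τ ∈ Set.Icc (0:ℝ) T, (∫ s in (0:ℝ)..τ, v s τ) = φ τ := by
    intro τ hτ
    rw [intervalIntegral.integral_of_le hτ.1, hφeq τ hτ]
  -- integrability of the comparison integrands
  have hwH : IntegrableOn (fun τ => w τ * H τ) (Set.Icc 0 T) := by
    have := hw_int.bdd_mul hHmeas.aestronglyMeasurable.restrict (Filter.Eventually.of_forall hHnorm)
    exact this.congr (Filter.Eventually.of_forall fun x => mul_comm _ _)
  have hφH : IntegrableOn (fun τ => φ τ * H τ) (Set.Icc 0 T) := by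
    have := hφint.bdd_mul hHmeas.aestronglyMeasurable.restrict (Filter.Eventually.of_forall hHnorm)
    exact this.congr (Filter.Eventually.of_forall fun x => mul_comm _ _)
  -- a.e. key inequality: inner double integral ≤ φ τ * H τ
  have hkey : ∀ᵐ τ ∂μ, (∫ s in (0:ℝ)..τ, v s τ * h s) ≤ φ τ * H τ := by
    filter_upwards [hKint.prod_left_ae, ae_restrict_mem measurableSet_Icc] with τ hKτ hτmem
    have hvτ : IntegrableOn (fun s => v s τ) (Set.Ioc 0 τ) := by
      have h1 : IntegrableOn (fun s => Set.indicator (Set.Iic τ) (fun s => v s τ) s)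
          (Set.Icc 0 T) := by
        exact hKτ.congr (Filter.Eventually.of_forall fun s => (congrFun (hKslice τ) s).symm)
      have h2 : IntegrableOn (fun s => Set.indicator (Set.Iic τ) (fun s => v s τ) s)
          (Set.Ioc 0 τ) := h1.mono_set (fun x hx => ⟨hx.1.le, le_trans hx.2 hτmem.2⟩)
      refine h2.congr_fun (fun x hx => Set.indicator_of_mem hx.2 _) measurableSet_Ioc
    rw [intervalIntegral.integral_of_le hτmem.1, hφeq τ hτmem]
    have step : (∫ s in Set.Ioc (0:ℝ) τ, v s τ * h s) ≤ ∫ s in Set.Ioc (0:ℝ) τ, v s τ * H τ := by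
      refine integral_mono_of_nonneg ?_ (hvτ.mul_const _) ?_
      · filter_upwards [ae_restrict_mem measurableSet_Ioc] with s hs
        exact mul_nonneg (hv_nonneg s ⟨hs.1.le, le_trans hs.2 hτmem.2⟩ τ hτmem)
          (hh_nonneg s ⟨hs.1.le, le_trans hs.2 hτmem.2⟩)
      · filter_upwards [ae_restrict_mem measurableSet_Ioc] with s hs
        exact mul_le_mul_of_nonneg_left
          (hle hs.1.le hs.2 (le_trans hs.2 hτmem.2))
          (hv_nonneg s ⟨hs.1.le, le_trans hs.2 hτmem.2⟩ τ hτmem)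
    calc (∫ s in Set.Ioc (0:ℝ) τ, v s τ * h s) ≤ ∫ s in Set.Ioc (0:ℝ) τ, v s τ * H τ := step
      _ = (∫ s in Set.Ioc (0:ℝ) τ, v s τ) * H τ := by rw [integral_mul_const]
  -- main chain
  obtain ⟨t₀, ht₀, hHt⟩ := hattain t ht
  have ht₀T : t₀ ∈ Set.Icc (0:ℝ) T := ⟨ht₀.1, le_trans ht₀.2 ht.2⟩
  have hIocsub : Set.Ioc (0:ℝ) t₀ ⊆ Set.Icc 0 T := fun x hx =>
    ⟨hx.1.le, le_trans hx.2 ht₀T.2⟩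
  have hIoctsub : Set.Ioc (0:ℝ) t ⊆ Set.Icc 0 T := fun x hx =>
    ⟨hx.1.le, le_trans hx.2 ht.2⟩
  -- bound the first integral term
  have hA : (∫ τ in (0:ℝ)..t₀, w τ * h τ) ≤ ∫ τ in Set.Ioc (0:ℝ) t₀, w τ * H τ := by
    rw [intervalIntegral.integral_of_le ht₀.1]
    refine integral_mono_of_nonneg ?_ (hwH.mono_set hIocsub) ?_
    · filter_upwards [ae_restrict_mem measurableSet_Ioc] with τ hτ
      exact mul_nonneg (hw_nonneg τ (hIocsub hτ)) (hh_nonneg τ (hIocsub hτ))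
    · filter_upwards [ae_restrict_mem measurableSet_Ioc] with τ hτ
      exact mul_le_mul_of_nonneg_left (hle hτ.1.le le_rfl (hIocsub hτ).2)
        (hw_nonneg τ (hIocsub hτ))
  -- bound the second integral term
  have hB : (∫ τ in (0:ℝ)..t₀, (∫ s in (0:ℝ)..τ, v s τ * h s))
      ≤ ∫ τ in Set.Ioc (0:ℝ) t₀, φ τ * H τ := by
    rw [intervalIntegral.integral_of_le ht₀.1]
    refine integral_mono_of_nonneg ?_ (hφH.mono_set hIocsub) ?_
    · filter_upwards [ae_restrict_mem measurableSet_Ioc] with τ hτ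
      refine intervalIntegral.integral_nonneg hτ.1.le fun s hs => ?_
      exact mul_nonneg
        (hv_nonneg s ⟨hs.1, le_trans hs.2 (hIocsub hτ).2⟩ τ (hIocsub hτ))
        (hh_nonneg s ⟨hs.1, le_trans hs.2 (hIocsub hτ).2⟩)
    · exact ae_restrict_of_ae_restrict_of_subset hIocsub hkey
  -- nonnegativity of the combined integrand
  have hGnonneg : ∀ τ ∈ Set.Icc (0:ℝ) T, 0 ≤ (w τ + φ τ) * H τ := fun τ hτ =>
    mul_nonneg (add_nonneg (hw_nonneg τ hτ) (hφ0 τ hτ)) (hH0 τ)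
  have hGint : IntegrableOn (fun τ => (w τ + φ τ) * H τ) (Set.Icc 0 T) := by
    refine (hwH.add hφH).congr (Filter.Eventually.of_forall fun x => ?_)
    simp only [Pi.add_apply]; ring
  -- combine
  have hsum : (∫ τ in Set.Ioc (0:ℝ) t₀, w τ * H τ) + (∫ τ in Set.Ioc (0:ℝ) t₀, φ τ * H τ)
      = ∫ τ in Set.Ioc (0:ℝ) t₀, (w τ + φ τ) * H τ := by
    rw [← integral_add (hwH.mono_set hIocsub) (hφH.mono_set hIocsub)]
    refine integral_congr_ae (Filter.Eventually.of_forall fun x => ?_)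
    ring
  have hext : (∫ τ in Set.Ioc (0:ℝ) t₀, (w τ + φ τ) * H τ)
      ≤ ∫ τ in Set.Ioc (0:ℝ) t, (w τ + φ τ) * H τ := by
    refine setIntegral_mono_set (hGint.mono_set hIoctsub) ?_ ?_
    · filter_upwards [ae_restrict_mem measurableSet_Ioc] with τ hτ
      exact hGnonneg τ (hIoctsub hτ)
    · exact HasSubset.Subset.eventuallyLE (Set.Ioc_subset_Ioc le_rfl ht₀.2)
  have hfinal : (∫ τ in Set.Ioc (0:ℝ) t, (w τ + φ τ) * H τ)
      = ∫ τ in (0:ℝ)..t, (w τ + ∫ s in (0:ℝ)..τ, v s τ) * sSup (h '' Set.Icc 0 τ) := by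
    rw [intervalIntegral.integral_of_le ht.1]
    refine setIntegral_congr_fun measurableSet_Ioc fun τ hτ => ?_
    have hτT : τ ∈ Set.Icc (0:ℝ) T := hIoctsub hτ
    rw [hinner_eq τ hτT, hHeq τ hτT]
  -- put it together
  rw [← hHeq t ht, hHt]
  calc h t₀ ≤ α + (∫ τ in (0:ℝ)..t₀, w τ * h τ)
        + ∫ τ in (0:ℝ)..t₀, (∫ s in (0:ℝ)..τ, v s τ * h s) := hineq t₀ ht₀T
    _ ≤ α + (∫ τ in Set.Ioc (0:ℝ) t₀, w τ * H τ)
        + ∫ τ in Set.Ioc (0:ℝ) t₀, φ τ * H τ := by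
        have := add_le_add (add_le_add_left hA α) hB
        linarith
    _ = α + ∫ τ in Set.Ioc (0:ℝ) t₀, (w τ + φ τ) * H τ := by rw [add_assoc, hsum]
    _ ≤ α + ∫ τ in Set.Ioc (0:ℝ) t, (w τ + φ τ) * H τ := by linarith
    _ = α + ∫ τ in (0:ℝ)..t, (w τ + ∫ s in (0:ℝ)..τ, v s τ) * sSup (h '' Set.Icc 0 τ) := by
        rw [hfinal]
end
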